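/- arXiv:1307.2824 — 7 statements merged into one kernel-verified Lean document; each statement's English description precedes it below -/
import Mathlib

section
/- Let N(p) - 1 ~ Bin(n-1, p) with n ≥ 2 and 0 < p < 1. Then E[log(N(p)/n)] > log p. -/
open Finset

theorem expected_log_survivor_fraction (n : ℕ) (hn : 2 ≤ n) (p : ℝ) (hp0 : 0 < p) (hp1 : p < 1) :
    (∑ k ∈ Finset.range n,
        ((n - 1).choose k : ℝ) * p ^ k * (1 - p) ^ (n - 1 - k) * Real.log ((k + 1 : ℝ) / n))
      > Real.log p := by
  have hq0 : 0 < 1 - p := by linarith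
  have hn0 : (0:ℝ) < n := by exact_mod_cast (by omega : 0 < n)
  set q : ℝ := 1 - p with hqdef
  set w : ℕ → ℝ := fun k => ((n - 1).choose k : ℝ) * p ^ k * q ^ (n - 1 - k) with hwdef
  have hwpos : ∀ k ∈ range n, 0 < w k := by
    intro k hk
    rw [mem_range] at hk
    have hc : 0 < ((n-1).choose k : ℝ) := by
      exact_mod_cast Nat.choose_pos (by omega : k ≤ n - 1)
    positivity
  have hpq : p + q = 1 := by ring
  have hsumw : ∑ k ∈ range n, w k = 1 := by
    have h := add_pow p q (n-1)
    rw [Nat.sub_add_cancel (by omega : 1 ≤ n), hpq, one_pow] at h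
    rw [h]
    exact Finset.sum_congr rfl fun k _ => by ring
  have hkey : ∀ k ∈ range n, w k * ((n:ℝ) * p / (k+1)) =
      (n.choose (k+1) : ℝ) * p^(k+1) * q^(n-(k+1)) := by
    intro k hk
    rw [mem_range] at hk
    have h1 : (n:ℝ) * ((n-1).choose k) = (n.choose (k+1)) * (k+1) := by
      have h := Nat.add_one_mul_choose_eq (n-1) k
      rw [Nat.sub_add_cancel (by omega : 1 ≤ n)] at h
      exact_mod_cast h
    have h2 : n - 1 - k = n - (k+1) := by omega
    have hk1 : ((k:ℝ)+1) ≠ 0 := by positivity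
    rw [hwdef]
    simp only [← h2]
    field_simp
    linear_combination (p^(k+1)) * h1
  have hsum2 : ∑ k ∈ range n, w k * ((n:ℝ) * p / (k+1)) = 1 - q^n := by
    rw [Finset.sum_congr rfl hkey]
    have h := add_pow p q n
    rw [hpq, one_pow] at h
    have h' := Finset.sum_range_succ' (fun j => p^j * q^(n-j) * (n.choose j : ℝ)) n
    rw [← h] at h'
    simp only [pow_zero, Nat.sub_zero, Nat.choose_zero_right, Nat.cast_one, one_mul, mul_one] at h'
    have : ∑ k ∈ range n, (n.choose (k+1) : ℝ) * p^(k+1) * q^(n-(k+1))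
        = ∑ k ∈ range n, p^(k+1) * q^(n-(k+1)) * (n.choose (k+1) : ℝ) :=
      Finset.sum_congr rfl fun k _ => by ring
    rw [this]
    linarith [h']
  have hlog : ∀ k ∈ range n, w k * (1 - (n:ℝ)*p/((k:ℝ)+1)) ≤
      w k * Real.log (((k:ℝ)+1)/((n:ℝ)*p)) := by
    intro k hk
    have hx : 0 < ((k:ℝ)+1)/((n:ℝ)*p) := by positivity
    have h := Real.log_le_sub_one_of_pos (inv_pos.mpr hx)
    rw [Real.log_inv, inv_div] at h
    have hle : 1 - (n:ℝ)*p/((k:ℝ)+1) ≤ Real.log (((k:ℝ)+1)/((n:ℝ)*p)) := by linarith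
    exact mul_le_mul_of_nonneg_left hle (le_of_lt (hwpos k hk))
  have hsplit : ∀ k ∈ range n, Real.log (((k:ℝ)+1)/(n:ℝ)) =
      Real.log (((k:ℝ)+1)/((n:ℝ)*p)) + Real.log p := by
    intro k hk
    have hk1 : ((k:ℝ)+1) ≠ 0 := by positivity
    rw [Real.log_div hk1 (ne_of_gt hn0), Real.log_div hk1 (by positivity),
      Real.log_mul (ne_of_gt hn0) (ne_of_gt hp0)]
    ring
  have e1 : ∑ k ∈ range n, w k * Real.log (((k:ℝ)+1)/(n:ℝ))
      = (∑ k ∈ range n, w k * Real.log (((k:ℝ)+1)/((n:ℝ)*p))) + Real.log p := by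
    calc ∑ k ∈ range n, w k * Real.log (((k:ℝ)+1)/(n:ℝ))
        = ∑ k ∈ range n, (w k * Real.log (((k:ℝ)+1)/((n:ℝ)*p)) + w k * Real.log p) := by
          refine Finset.sum_congr rfl fun k hk => ?_
          rw [hsplit k hk]; ring
      _ = (∑ k ∈ range n, w k * Real.log (((k:ℝ)+1)/((n:ℝ)*p)))
            + (∑ k ∈ range n, w k) * Real.log p := by
          rw [Finset.sum_add_distrib, ← Finset.sum_mul]
      _ = _ := by rw [hsumw, one_mul]
  have e2 : ∑ k ∈ range n, w k * (1 - (n:ℝ)*p/((k:ℝ)+1)) = q^n := by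
    have : ∑ k ∈ range n, w k * (1 - (n:ℝ)*p/((k:ℝ)+1))
        = (∑ k ∈ range n, w k) - ∑ k ∈ range n, w k * ((n:ℝ)*p/((k:ℝ)+1)) := by
      rw [← Finset.sum_sub_distrib]
      exact Finset.sum_congr rfl fun k _ => by ring
    rw [this, hsumw, hsum2]
    ring
  have hqn : 0 < q^n := pow_pos hq0 n
  have hmain : (∑ k ∈ range n, w k * Real.log (((k:ℝ)+1)/((n:ℝ)*p))) ≥ q^n := by
    rw [← e2]
    exact Finset.sum_le_sum hlog
  calc ∑ k ∈ range n, w k * Real.log (((k:ℝ)+1)/(n:ℝ)) > 0 + Real.log p := by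
        rw [e1]; linarith
    _ = Real.log p := by ring
end

section
/- Define θ_{n,γ}(p) = E[(n/N(p))^{1-γ}] where N(p) - 1 ~ Bin(n-1,p), and β_{n,γ}(p) = p·θ_{n,γ}(p). For any n ≥ 2, 0 < p < 1, and γ with 0 < γ < 1, we have β_{n,γ}(p) < p^γ. -/
open Finset

lemma binom_sum (m : ℕ) (p : ℝ) :
    ∑ k ∈ Finset.range (m + 1), (m.choose k : ℝ) * p ^ k * (1 - p) ^ (m - k) = 1 := by
  have h := add_pow p (1 - p) m
  have h2 : (p + (1 - p)) ^ m = ∑ k ∈ Finset.range (m + 1),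
      (m.choose k : ℝ) * p ^ k * (1 - p) ^ (m - k) := by
    rw [h]; apply Finset.sum_congr rfl; intro k _; ring
  rw [← h2]; norm_num

lemma sum_wx (m : ℕ) (p : ℝ) (hp0 : 0 < p) :
    ∑ k ∈ Finset.range (m + 1),
      (m.choose k : ℝ) * p ^ k * (1 - p) ^ (m - k) * (((m : ℝ) + 1) / (k + 1))
      = (1 - (1 - p) ^ (m + 1)) / p := by
  have step1 : ∀ k ∈ Finset.range (m + 1),
      (m.choose k : ℝ) * p ^ k * (1 - p) ^ (m - k) * (((m : ℝ) + 1) / (k + 1))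
      = ((m + 1).choose (k + 1) : ℝ) * p ^ (k + 1) * (1 - p) ^ (m + 1 - (k + 1)) / p := by
    intro k hk
    have hc : ((m : ℝ) + 1) * (m.choose k : ℝ) = ((m + 1).choose (k + 1) : ℝ) * ((k : ℝ) + 1) := by
      exact_mod_cast congrArg (Nat.cast : ℕ → ℝ) (Nat.add_one_mul_choose_eq m k)
    have hk1 : ((k : ℝ) + 1) ≠ 0 := by positivity
    have hmk : m + 1 - (k + 1) = m - k := by omega
    have key : (m.choose k : ℝ) * (((m : ℝ) + 1) / ((k : ℝ) + 1)) = ((m + 1).choose (k + 1) : ℝ) := by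
      rw [mul_div_assoc', div_eq_iff hk1]; linarith
    calc (m.choose k : ℝ) * p ^ k * (1 - p) ^ (m - k) * (((m : ℝ) + 1) / (k + 1))
        = ((m.choose k : ℝ) * (((m : ℝ) + 1) / ((k : ℝ) + 1))) * (p ^ k * (1 - p) ^ (m - k)) := by
          ring
      _ = ((m + 1).choose (k + 1) : ℝ) * (p ^ k * (1 - p) ^ (m - k)) := by rw [key]
      _ = ((m + 1).choose (k + 1) : ℝ) * p ^ (k + 1) * (1 - p) ^ (m + 1 - (k + 1)) / p := by
          rw [hmk, pow_succ]; field_simp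
  rw [Finset.sum_congr rfl step1]
  have h2 : ∑ k ∈ Finset.range (m + 2),
      ((m + 1).choose k : ℝ) * p ^ k * (1 - p) ^ (m + 1 - k) = 1 := binom_sum (m + 1) p
  rw [Finset.sum_range_succ'] at h2
  simp only [Nat.choose_zero_right, Nat.cast_one, pow_zero, Nat.sub_zero] at h2
  rw [← Finset.sum_div]
  have h3 : ∑ k ∈ Finset.range (m + 1),
      ((m + 1).choose (k + 1) : ℝ) * p ^ (k + 1) * (1 - p) ^ (m + 1 - (k + 1))
      = 1 - (1 - p) ^ (m + 1) := by linarith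
  rw [h3]

/-- θ_{n,γ}(p) = E[(n/N(p))^{1-γ}] where N(p) - 1 ~ Bin(n-1, p). -/
noncomputable def theta (n : ℕ) (γ p : ℝ) : ℝ :=
  ∑ k ∈ Finset.range n,
    ((n - 1).choose k : ℝ) * p ^ k * (1 - p) ^ (n - 1 - k) * ((n : ℝ) / (k + 1)) ^ (1 - γ)

/-- β_{n,γ}(p) = p · θ_{n,γ}(p). -/
noncomputable def beta (n : ℕ) (γ p : ℝ) : ℝ := p * theta n γ p

theorem beta_lt_rpow (n : ℕ) (hn : 2 ≤ n) (p γ : ℝ) (hp0 : 0 < p) (hp1 : p < 1)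
    (hγ0 : 0 < γ) (hγ1 : γ < 1) : beta n γ p < p ^ γ := by
  obtain ⟨m, rfl⟩ : ∃ m, n = m + 1 := ⟨n - 1, by omega⟩
  have hq0 : 0 < 1 - p := by linarith
  set w : ℕ → ℝ := fun k => (m.choose k : ℝ) * p ^ k * (1 - p) ^ (m - k) with hw
  have hw0 : ∀ k ∈ Finset.range (m + 1), 0 ≤ w k := by
    intro k _; positivity
  have hw1 : ∑ k ∈ Finset.range (m + 1), w k = 1 := binom_sum m p
  have hx0 : ∀ k ∈ Finset.range (m + 1), (((m : ℝ) + 1) / (k + 1)) ∈ Set.Ici (0 : ℝ) := by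
    intro k _; exact Set.mem_Ici.2 (by positivity)
  have hγ' : (0 : ℝ) ≤ 1 - γ := by linarith
  have hjensen := (Real.concaveOn_rpow hγ' (by linarith)).le_map_sum hw0 hw1 hx0
  simp only [smul_eq_mul] at hjensen
  have hθ : theta (m + 1) γ p
      = ∑ k ∈ Finset.range (m + 1), w k * (((m : ℝ) + 1) / (k + 1)) ^ (1 - γ) := by
    unfold theta
    apply Finset.sum_congr rfl
    intro k _
    simp only [hw, Nat.add_sub_cancel, Nat.cast_add, Nat.cast_one]
  have hsum : ∑ k ∈ Finset.range (m + 1), w k * (((m : ℝ) + 1) / (k + 1))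
      = (1 - (1 - p) ^ (m + 1)) / p := sum_wx m p hp0
  rw [hsum] at hjensen
  rw [← hθ] at hjensen
  set A : ℝ := (1 - (1 - p) ^ (m + 1)) / p with hA
  have hA0 : 0 ≤ A := by
    apply div_nonneg _ hp0.le
    have : (1 - p) ^ (m + 1) ≤ 1 := pow_le_one₀ hq0.le (by linarith)
    linarith
  have hAlt : A < 1 / p := by
    have hq : 0 < (1 - p) ^ (m + 1) := pow_pos hq0 (m + 1)
    rw [hA, div_lt_div_iff₀ hp0 hp0]
    nlinarith
  have hstrict : A ^ (1 - γ) < (1 / p) ^ (1 - γ) :=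
    Real.rpow_lt_rpow hA0 hAlt (by linarith)
  have hne : p ^ (1 - γ) ≠ 0 := (Real.rpow_pos_of_pos hp0 _).ne'
  have h3 : p * (1 / p) ^ (1 - γ) = p ^ γ := by
    have hpp : p ^ γ * p ^ (1 - γ) = p := by
      rw [← Real.rpow_add hp0]; norm_num
    rw [one_div, Real.inv_rpow hp0.le]
    calc p * (p ^ (1 - γ))⁻¹ = (p ^ γ * p ^ (1 - γ)) * (p ^ (1 - γ))⁻¹ := by rw [hpp]
      _ = p ^ γ := by field_simp
  have h1 : beta (m + 1) γ p ≤ p * A ^ (1 - γ) :=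
    mul_le_mul_of_nonneg_left hjensen hp0.le
  have h2 : p * A ^ (1 - γ) < p * (1 / p) ^ (1 - γ) :=
    mul_lt_mul_of_pos_left hstrict hp0
  linarith [h3 ▸ h2]
end

section
/- Define the ratio R_{n,γ}(p) = β_{n,γ}(p)^{1/γ}/p where β_{n,γ}(p) = p·∑_{k=0}^{n-1} C(n-1,k)p^k(1-p)^{n-1-k}(n/(k+1))^{1-γ}. For any n ≥ 2 and 0 < p < 1: R_{n,γ}(p) < 1 if 0 < γ < 1, R_{n,γ}(p) = 1 if γ = 1, and R_{n,γ}(p) > 1 if γ > 1. -/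
open Finset

/-- R_{n,γ}(p) = β_{n,γ}(p)^{1/γ} / p : ratio of optimal to natural tontine payout. -/
noncomputable def ratioR (n : ℕ) (γ p : ℝ) : ℝ := (beta n γ p) ^ (1 / γ) / p

/-- Convexity of `x ↦ x ^ c` on `(0, ∞)` for a negative exponent `c`. -/
lemma convexOn_rpow_neg {c : ℝ} (hc : c < 0) :
    ConvexOn ℝ (Set.Ioi 0) fun x : ℝ => x ^ c := by
  refine (strictConvexOn_of_deriv2_pos (convex_Ioi (0:ℝ))
    (fun x hx => (Real.continuousAt_rpow_const x c (Or.inl (ne_of_gt hx))).continuousWithinAt)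
    ?_).convexOn
  intro x hx
  rw [interior_Ioi] at hx
  have hx0 : (0:ℝ) < x := hx
  have hit : (deriv^[2] fun y : ℝ => y ^ c) x
      = deriv (deriv fun y : ℝ => y ^ c) x := by
    rw [Function.iterate_succ_apply', Function.iterate_one]
  have hderiv : deriv (deriv fun y : ℝ => y ^ c) x
      = deriv (fun y : ℝ => c * y ^ (c - 1)) x := by
    apply Filter.EventuallyEq.deriv_eq
    filter_upwards [isOpen_Ioi.mem_nhds hx0] with y hy
    exact Real.deriv_rpow_const y c
  have h2 : deriv (fun y : ℝ => c * y ^ (c - 1)) x = c * ((c - 1) * x ^ (c - 1 - 1)) :=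
    ((Real.hasDerivAt_rpow_const (p := c - 1) (Or.inl (ne_of_gt hx0))).const_mul c).deriv
  have hxp : (0:ℝ) < x ^ (c - 1 - 1) := Real.rpow_pos_of_pos hx0 _
  rw [hit, hderiv, h2]
  have hcc : 0 < c * (c - 1) := mul_pos_of_neg_of_neg hc (by linarith)
  calc (0:ℝ) < c * (c - 1) * x ^ (c - 1 - 1) := mul_pos hcc hxp
    _ = c * ((c - 1) * x ^ (c - 1 - 1)) := by ring

theorem ratioR_trichotomy (n : ℕ) (hn : 2 ≤ n) (p γ : ℝ) (hp0 : 0 < p) (hp1 : p < 1) :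
    (0 < γ → γ < 1 → ratioR n γ p < 1) ∧
    (γ = 1 → ratioR n γ p = 1) ∧
    (1 < γ → ratioR n γ p > 1) := by
  have hq0 : 0 < 1 - p := by linarith
  set w : ℕ → ℝ := fun k => ((n - 1).choose k : ℝ) * p ^ k * (1 - p) ^ (n - 1 - k) with hw
  set x : ℕ → ℝ := fun k => (n : ℝ) / (k + 1) with hx
  have hn1 : 1 ≤ n := by omega
  have hn1' : n - 1 + 1 = n := by omega
  -- each weight is positive
  have hwpos : ∀ k ∈ Finset.range n, 0 < w k := by
    intro k hk
    rw [Finset.mem_range] at hk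
    have hc : 0 < (n - 1).choose k := Nat.choose_pos (by omega)
    have : (0:ℝ) < ((n-1).choose k : ℝ) := by exact_mod_cast hc
    positivity
  have hxpos : ∀ k, 0 < x k := by
    intro k
    have hn0 : (0:ℝ) < (n:ℝ) := by positivity
    have : (0:ℝ) < (k:ℝ) + 1 := by positivity
    exact div_pos hn0 this
  -- sum of weights is 1
  have hsum_w : ∑ k ∈ Finset.range n, w k = 1 := by
    have h := add_pow p (1 - p) (n - 1)
    rw [hn1'] at h
    have hpq : p + (1 - p) = 1 := by ring
    rw [hpq, one_pow] at h
    calc ∑ k ∈ Finset.range n, w k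
        = ∑ k ∈ Finset.range n, p ^ k * (1 - p) ^ (n - 1 - k) * ((n - 1).choose k : ℝ) :=
          Finset.sum_congr rfl fun k _ => by simp only [hw]; ring
      _ = 1 := h.symm
  -- expectation of x
  have hkey : ∀ k, ((n - 1).choose k : ℝ) * n = (n.choose (k+1) : ℝ) * (k + 1) := by
    intro k
    have h := Nat.add_one_mul_choose_eq (n - 1) k
    have h2 : n * (n - 1).choose k = n.choose (k + 1) * (k + 1) := by
      rwa [hn1'] at h
    have h3 : ((n : ℝ)) * ((n - 1).choose k : ℝ) = (n.choose (k + 1) : ℝ) * ((k : ℝ) + 1) := by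
      exact_mod_cast congrArg (Nat.cast (R := ℝ)) h2
    linarith
  have hsum_wx : ∑ k ∈ Finset.range n, w k * x k = (1 - (1 - p) ^ n) / p := by
    rw [eq_div_iff (ne_of_gt hp0)]
    have hterm : ∀ k ∈ Finset.range n,
        w k * x k * p = (n.choose (k+1) : ℝ) * p ^ (k+1) * (1 - p) ^ (n - (k+1)) := by
      intro k hk
      rw [Finset.mem_range] at hk
      have he : n - 1 - k = n - (k + 1) := by omega
      have hk1 : ((k:ℝ) + 1) ≠ 0 := by positivity
      have hb : ((n - 1).choose k : ℝ) * n / ((k : ℝ) + 1) = (n.choose (k + 1) : ℝ) := by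
        rw [div_eq_iff hk1]; exact hkey k
      simp only [hw, hx, he]
      rw [← hb, pow_succ]
      ring
    rw [Finset.sum_mul, Finset.sum_congr rfl hterm]
    have h := add_pow p (1 - p) n
    have hpq : p + (1 - p) = 1 := by ring
    rw [hpq, one_pow] at h
    rw [Finset.sum_range_succ' (fun j => p ^ j * (1 - p) ^ (n - j) * (n.choose j : ℝ)) n] at h
    simp only [pow_zero, Nat.choose_zero_right, Nat.cast_one, Nat.sub_zero, one_mul, mul_one] at h
    have : ∑ k ∈ Finset.range n, (n.choose (k+1) : ℝ) * p ^ (k+1) * (1 - p) ^ (n - (k+1))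
        = ∑ k ∈ Finset.range n, p ^ (k+1) * (1 - p) ^ (n - (k+1)) * (n.choose (k+1) : ℝ) :=
      Finset.sum_congr rfl fun k _ => by ring
    rw [this]
    linarith
  -- expectation bounds
  set E : ℝ := (1 - (1 - p) ^ n) / p with hE
  have hqn : (0:ℝ) < (1 - p) ^ n := pow_pos hq0 n
  have hqn1 : (1 - p) ^ n < 1 := pow_lt_one₀ hq0.le (by linarith) (by omega)
  have hE_pos : 0 < E := div_pos (by linarith) hp0
  have hE_lt : E < 1 / p := by
    rw [hE, div_lt_div_iff₀ hp0 hp0]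
    nlinarith
  -- theta as weighted sum
  have htheta : ∀ γ : ℝ, theta n γ p = ∑ k ∈ Finset.range n, w k * (x k) ^ (1 - γ) := by
    intro γ; rfl
  have hne : (Finset.range n).Nonempty := by
    rw [Finset.nonempty_range_iff]; omega
  have hθpos : ∀ γ : ℝ, 0 < theta n γ p := by
    intro γ
    rw [htheta]
    exact Finset.sum_pos (fun k hk =>
      mul_pos (hwpos k hk) (Real.rpow_pos_of_pos (hxpos k) _)) hne
  have hinvp : (1 / p : ℝ) ^ (1 - γ) = p ^ (γ - 1) := by
    rw [one_div, Real.inv_rpow hp0.le, ← Real.rpow_neg hp0.le,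
      show -(1 - γ) = γ - 1 by ring]
  have hpmul : p * p ^ (γ - 1) = p ^ γ := by
    nth_rewrite 1 [← Real.rpow_one p]
    rw [← Real.rpow_add hp0]
    ring_nf
  refine ⟨?_, ?_, ?_⟩
  · -- 0 < γ < 1
    intro hγ0 hγ1
    have hconc : ConcaveOn ℝ (Set.Ici 0) fun t : ℝ => t ^ (1 - γ) :=
      Real.concaveOn_rpow (by linarith) (by linarith)
    have hjen := hconc.le_map_sum (t := Finset.range n) (w := w) (p := x)
      (fun k hk => (hwpos k hk).le) hsum_w (fun k _ => (hxpos k).le)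
    simp only [smul_eq_mul] at hjen
    rw [hsum_wx] at hjen
    have hθ : theta n γ p ≤ E ^ (1 - γ) := by rw [htheta]; exact hjen
    have hElt : E ^ (1 - γ) < (1 / p) ^ (1 - γ) :=
      Real.rpow_lt_rpow hE_pos.le hE_lt (by linarith)
    rw [hinvp] at hElt
    have hβ : beta n γ p < p ^ γ := by
      rw [beta, ← hpmul]
      have := lt_of_le_of_lt hθ hElt
      exact mul_lt_mul_of_pos_left this hp0
    have hβ0 : 0 < beta n γ p := mul_pos hp0 (hθpos γ)
    have : (beta n γ p) ^ (1 / γ) < (p ^ γ) ^ (1 / γ) :=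
      Real.rpow_lt_rpow hβ0.le hβ (by positivity)
    rw [← Real.rpow_mul hp0.le, mul_one_div, div_self (ne_of_gt hγ0), Real.rpow_one] at this
    rw [ratioR, div_lt_one hp0]
    exact this
  · -- γ = 1
    intro hγ
    subst hγ
    have : theta n 1 p = 1 := by
      rw [htheta]
      simp only [sub_self, Real.rpow_zero, mul_one]
      exact hsum_w
    rw [ratioR, beta, this, mul_one, show (1:ℝ)/1 = 1 by norm_num, Real.rpow_one,
      div_self (ne_of_gt hp0)]
  · -- γ > 1
    intro hγ
    have hγ0 : 0 < γ := by linarith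
    have hconv : ConvexOn ℝ (Set.Ioi 0) fun t : ℝ => t ^ (1 - γ) :=
      convexOn_rpow_neg (by linarith)
    have hjen := hconv.map_sum_le (t := Finset.range n) (w := w) (p := x)
      (fun k hk => (hwpos k hk).le) hsum_w (fun k _ => hxpos k)
    simp only [smul_eq_mul] at hjen
    rw [hsum_wx] at hjen
    have hθ : E ^ (1 - γ) ≤ theta n γ p := by rw [htheta]; exact hjen
    have hElt : (1 / p) ^ (1 - γ) < E ^ (1 - γ) :=
      Real.rpow_lt_rpow_of_neg hE_pos hE_lt (by linarith)
    rw [hinvp] at hElt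
    have hβ : p ^ γ < beta n γ p := by
      rw [beta, ← hpmul]
      exact mul_lt_mul_of_pos_left (lt_of_lt_of_le hElt hθ) hp0
    have hpγ : (0:ℝ) < p ^ γ := Real.rpow_pos_of_pos hp0 γ
    have : (p ^ γ) ^ (1 / γ) < (beta n γ p) ^ (1 / γ) :=
      Real.rpow_lt_rpow hpγ.le hβ (by positivity)
    rw [← Real.rpow_mul hp0.le, mul_one_div, div_self (ne_of_gt hγ0), Real.rpow_one] at this
    rw [ratioR, gt_iff_lt, lt_div_iff₀ hp0, one_mul]
    exact this
end

section
/- Among payout functions c: [0,∞) → (0,∞) satisfying the budget constraint ∫₀^∞ e^{-rt} s(t) c(t) dt = 1, the constant function c(t) ≡ c₀ = (∫₀^∞ e^{-rt} s(t) dt)^{-1} uniquely maximizes the lifetime utility ∫₀^∞ e^{-rt} s(t) u(c(t)) dt, where u is strictly concave and increasing. -/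
open MeasureTheory Set

/-- Strict tangent-line inequality for a strictly concave differentiable function. -/
lemma yaari_tangent_lt {u : ℝ → ℝ} (hconc : StrictConcaveOn ℝ (Ioi 0) u)
    {x y : ℝ} (hx : x ∈ Ioi (0 : ℝ)) (hy : y ∈ Ioi (0 : ℝ)) (hyx : y ≠ x)
    (hd : DifferentiableAt ℝ u x) :
    u y < u x + deriv u x * (y - x) := by
  rcases lt_or_gt_of_ne hyx with h | h
  · have hs := hconc.deriv_lt_slope hy hx h hd
    rw [slope_def_field] at hs
    have hxy : 0 < x - y := by linarith
    rw [lt_div_iff₀ hxy] at hs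
    nlinarith
  · have hs := hconc.slope_lt_deriv hx hy h hd
    rw [slope_def_field] at hs
    have hxy : 0 < y - x := by linarith
    rw [div_lt_iff₀ hxy] at hs
    nlinarith

theorem yaari_constant_annuity_optimal (r : ℝ) (hr : 0 < r) (s : ℝ → ℝ)
    (hmeas : Measurable s) (hpos : ∀ t : ℝ, 0 < s t) (hle : ∀ t : ℝ, s t ≤ 1)
    (hint : IntegrableOn (fun t => Real.exp (-r * t) * s t) (Ioi 0))
    (hIpos : 0 < ∫ t in Ioi (0 : ℝ), Real.exp (-r * t) * s t)
    (u : ℝ → ℝ) (hconc : StrictConcaveOn ℝ (Ioi 0) u)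
    (hdiff : ∀ x ∈ Ioi (0 : ℝ), DifferentiableAt ℝ u x)
    (hmono : StrictMonoOn u (Ioi 0))
    (c : ℝ → ℝ) (hcmeas : Measurable c) (hcpos : ∀ t : ℝ, 0 < c t)
    (hbudget : ∫ t in Ioi (0 : ℝ), Real.exp (-r * t) * s t * c t = 1)
    (hcint : IntegrableOn (fun t => Real.exp (-r * t) * s t * u (c t)) (Ioi 0)) :
    (∫ t in Ioi (0 : ℝ), Real.exp (-r * t) * s t * u (c t)) ≤
      (∫ t in Ioi (0 : ℝ), Real.exp (-r * t) * s t *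
        u ((∫ τ in Ioi (0 : ℝ), Real.exp (-r * τ) * s τ)⁻¹)) ∧
    ((∫ t in Ioi (0 : ℝ), Real.exp (-r * t) * s t * u (c t)) =
      (∫ t in Ioi (0 : ℝ), Real.exp (-r * t) * s t *
        u ((∫ τ in Ioi (0 : ℝ), Real.exp (-r * τ) * s τ)⁻¹)) →
      c =ᵐ[volume.restrict (Ioi (0 : ℝ))]
        fun _ => (∫ τ in Ioi (0 : ℝ), Real.exp (-r * τ) * s τ)⁻¹) := by
  set w : ℝ → ℝ := fun t => Real.exp (-r * t) * s t with hw
  set I : ℝ := ∫ t in Ioi (0 : ℝ), w t with hI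
  set c₀ : ℝ := I⁻¹ with hc₀
  have hwpos : ∀ t, 0 < w t := fun t => mul_pos (Real.exp_pos _) (hpos t)
  have hIne : I ≠ 0 := ne_of_gt hIpos
  have hc₀pos : 0 < c₀ := inv_pos.mpr hIpos
  have hc₀mem : c₀ ∈ Ioi (0 : ℝ) := hc₀pos
  set k : ℝ := deriv u c₀ with hk
  have hwc_int : IntegrableOn (fun t => w t * c t) (Ioi 0) := by
    by_contra h
    rw [show (∫ t in Ioi (0 : ℝ), Real.exp (-r * t) * s t * c t)
        = ∫ t in Ioi (0 : ℝ), w t * c t from rfl, integral_undef h] at hbudget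
    exact one_ne_zero hbudget.symm
  set g : ℝ → ℝ := fun t => w t * (u c₀ + k * (c t - c₀) - u (c t)) with hg
  have hg_nonneg : ∀ t ∈ Ioi (0 : ℝ), 0 ≤ g t := by
    intro t _
    have hb : u (c t) ≤ u c₀ + k * (c t - c₀) := by
      rcases eq_or_ne (c t) c₀ with h | h
      · rw [h]; simp
      · exact le_of_lt (yaari_tangent_lt hconc hc₀mem (hcpos t) h (hdiff c₀ hc₀mem))
    exact mul_nonneg (hwpos t).le (by linarith)
  have int1 : IntegrableOn (fun t => u c₀ * w t) (Ioi 0) := hint.const_mul _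
  have int2 : IntegrableOn (fun t => k * (w t * c t)) (Ioi 0) := hwc_int.const_mul _
  have int3 : IntegrableOn (fun t => k * c₀ * w t) (Ioi 0) := hint.const_mul _
  have hcint' : IntegrableOn (fun t => w t * u (c t)) (Ioi 0) := hcint
  have int12 : IntegrableOn (fun t => u c₀ * w t + k * (w t * c t)) (Ioi 0) := int1.add int2
  have int34 : IntegrableOn (fun t => k * c₀ * w t + w t * u (c t)) (Ioi 0) := int3.add hcint'
  have haux : IntegrableOn (fun t => (u c₀ * w t + k * (w t * c t))
      - (k * c₀ * w t + w t * u (c t))) (Ioi 0) := int12.sub int34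
  have hg_int : IntegrableOn g (Ioi 0) :=
    haux.congr_fun (fun t _ => by simp only [hg]; ring) measurableSet_Ioi
  have hRHS : (∫ t in Ioi (0 : ℝ), Real.exp (-r * t) * s t *
      u ((∫ τ in Ioi (0 : ℝ), Real.exp (-r * τ) * s τ)⁻¹)) = u c₀ * I := by
    rw [show (fun t => Real.exp (-r * t) * s t *
        u ((∫ τ in Ioi (0 : ℝ), Real.exp (-r * τ) * s τ)⁻¹))
        = fun t => w t * u c₀ from rfl]
    rw [MeasureTheory.integral_mul_const]
    ring
  have hgval : (∫ t in Ioi (0 : ℝ), g t)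
      = u c₀ * I - ∫ t in Ioi (0 : ℝ), w t * u (c t) := by
    have h1 : (∫ t in Ioi (0 : ℝ), g t)
        = ∫ t in Ioi (0 : ℝ), ((u c₀ * w t + k * (w t * c t))
          - (k * c₀ * w t + w t * u (c t))) :=
      setIntegral_congr_fun measurableSet_Ioi (fun t _ => by simp only [hg]; ring)
    rw [h1, integral_sub int12 int34, integral_add int1 int2, integral_add int3 hcint',
      integral_const_mul, integral_const_mul, integral_const_mul]
    have hb : (∫ t in Ioi (0 : ℝ), w t * c t) = 1 := hbudget
    rw [hb, ← hI]
    have h2 : k * c₀ * I = k := by rw [mul_assoc, inv_mul_cancel₀ hIne, mul_one]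
    linarith
  have hgnn : 0 ≤ ∫ t in Ioi (0 : ℝ), g t :=
    setIntegral_nonneg measurableSet_Ioi hg_nonneg
  have hLHS : (∫ t in Ioi (0 : ℝ), Real.exp (-r * t) * s t * u (c t))
      = ∫ t in Ioi (0 : ℝ), w t * u (c t) := rfl
  constructor
  · rw [hRHS, hLHS]; linarith [hgval, hgnn]
  · intro heq
    rw [hRHS, hLHS] at heq
    have hzero : (∫ t in Ioi (0 : ℝ), g t) = 0 := by linarith [hgval]
    have hae0 : g =ᵐ[volume.restrict (Ioi (0 : ℝ))] 0 := by
      refine (integral_eq_zero_iff_of_nonneg_ae ?_ hg_int).mp hzero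
      exact (ae_restrict_iff' measurableSet_Ioi).mpr (ae_of_all _ hg_nonneg)
    filter_upwards [hae0, ae_restrict_mem measurableSet_Ioi] with t hgt ht
    by_contra hne
    have hlt := yaari_tangent_lt hconc hc₀mem (hcpos t) hne (hdiff c₀ hc₀mem)
    have hgpos : 0 < w t * (u c₀ + k * (c t - c₀) - u (c t)) :=
      mul_pos (hwpos t) (by linarith)
    simp only [Pi.zero_apply, hg] at hgt
    linarith
end

section
/- For CRRA utility with γ > 1, γ ≠ 1, the utility of the optimal tontine U^{OT}_{n,γ} = (1/(1-γ))·(∫₀^∞ e^{-rt} β_{n,γ}(s(t))^{1/γ} dt)^γ is strictly less than the annuity utility U^A_γ = (1/(1-γ))·(∫₀^∞ e^{-rt} s(t) dt)^γ. -/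
open Finset MeasureTheory Set

lemma convexOn_rpow_nonpos {c : ℝ} (hc : c ≤ 0) :
    ConvexOn ℝ (Ioi (0:ℝ)) fun x : ℝ => x ^ c := by
  have hderiv : ∀ x ∈ Ioi (0:ℝ), HasDerivAt (fun x : ℝ => x ^ c) (c * x ^ (c - 1)) x :=
    fun x hx => Real.hasDerivAt_rpow_const (Or.inl (ne_of_gt hx))
  apply convexOn_of_deriv2_nonneg (convex_Ioi 0)
  · exact fun x hx => (hderiv x hx).continuousAt.continuousWithinAt
  · rw [interior_Ioi]
    exact fun x hx => ((hderiv x hx).differentiableAt).differentiableWithinAt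
  · rw [interior_Ioi]
    intro x hx
    have : deriv (fun x : ℝ => x ^ c) =ᶠ[nhds x] fun y => c * y ^ (c - 1) := by
      filter_upwards [IsOpen.mem_nhds isOpen_Ioi hx] with y hy
      exact (hderiv y hy).deriv
    refine DifferentiableAt.differentiableWithinAt ?_
    rw [Filter.EventuallyEq.differentiableAt_iff this]
    exact (Real.hasDerivAt_rpow_const (p := c - 1) (Or.inl (ne_of_gt hx))).differentiableAt.const_mul c
  · rw [interior_Ioi]
    intro x hx
    have h1 : deriv (fun x : ℝ => x ^ c) =ᶠ[nhds x] fun y => c * y ^ (c - 1) := by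
      filter_upwards [IsOpen.mem_nhds isOpen_Ioi hx] with y hy
      exact (hderiv y hy).deriv
    have h2 : deriv^[2] (fun x : ℝ => x ^ c) x
        = c * ((c - 1) * x ^ (c - 1 - 1)) := by
      rw [Function.iterate_succ, Function.iterate_one, Function.comp_apply]
      rw [Filter.EventuallyEq.deriv_eq h1]
      rw [deriv_const_mul _ (Real.hasDerivAt_rpow_const (p := c - 1)
        (Or.inl (ne_of_gt hx))).differentiableAt]
      rw [(Real.hasDerivAt_rpow_const (p := c - 1) (Or.inl (ne_of_gt hx))).deriv]
    rw [h2]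
    have : 0 < x ^ (c - 1 - 1) := Real.rpow_pos_of_pos hx _
    have h3 : 0 ≤ c * (c - 1) := by nlinarith [sq_nonneg c]
    nlinarith [mul_nonneg h3 this.le]

lemma rpow_lt_theta (n : ℕ) (hn : 2 ≤ n) {γ p : ℝ} (hγ : 1 < γ)
    (hp0 : 0 < p) (hp1 : p < 1) : p ^ (γ - 1) < theta n γ p := by
  have hc : (1 - γ) < 0 := by linarith
  set w : ℕ → ℝ := fun k => ((n - 1).choose k : ℝ) * p ^ k * (1 - p) ^ (n - 1 - k) with hw
  set y : ℕ → ℝ := fun k => (n : ℝ) / (k + 1) with hy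
  have h1p : (0:ℝ) < 1 - p := by linarith
  have hw0 : ∀ k ∈ Finset.range n, 0 ≤ w k := by
    intro k _; positivity
  have hw1 : ∑ k ∈ Finset.range n, w k = 1 := by
    have h := add_pow p (1 - p) (n - 1)
    have hnn : n - 1 + 1 = n := by omega
    rw [hnn] at h
    have : ∑ k ∈ Finset.range n, w k
        = ∑ k ∈ Finset.range n, p ^ k * (1 - p) ^ (n - 1 - k) * ((n-1).choose k : ℝ) := by
      apply Finset.sum_congr rfl; intro k _; simp [hw]; ring
    rw [this, ← h]
    norm_num
  have hymem : ∀ k ∈ Finset.range n, y k ∈ Ioi (0:ℝ) := by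
    intro k _
    have : (0:ℝ) < n := by positivity
    exact div_pos this (by positivity)
  set EY : ℝ := ∑ k ∈ Finset.range n, w k * y k with hEY
  have hpEY : p * EY = 1 - (1 - p) ^ n := by
    have hterm : ∀ k ∈ Finset.range n,
        p * (w k * y k) = p ^ (k+1) * (1 - p) ^ (n - (k+1)) * (n.choose (k+1) : ℝ) := by
      intro k hk
      rw [Finset.mem_range] at hk
      have hid : (n : ℝ) * ((n-1).choose k : ℝ) = ((n.choose (k+1) : ℝ)) * ((k:ℝ)+1) := by
        have h := Nat.add_one_mul_choose_eq (n - 1) k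
        have hnn : n - 1 + 1 = n := by omega
        rw [hnn] at h
        exact_mod_cast congrArg (Nat.cast (R := ℝ)) h
      have hsub : n - 1 - k = n - (k + 1) := by omega
      have hk1 : ((k:ℝ) + 1) ≠ 0 := by positivity
      have hkey : ((n - 1).choose k : ℝ) * ((n:ℝ) / ((k:ℝ) + 1)) = (n.choose (k+1) : ℝ) := by
        rw [mul_div_assoc'] at *
        rw [div_eq_iff hk1]
        linarith [hid]
      calc p * (w k * y k)
          = (((n - 1).choose k : ℝ) * ((n:ℝ) / ((k:ℝ) + 1)))
            * (p ^ (k+1) * (1 - p) ^ (n - 1 - k)) := by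
            simp only [hw, hy]; ring
        _ = p ^ (k+1) * (1 - p) ^ (n - (k+1)) * (n.choose (k+1) : ℝ) := by
            rw [hkey, hsub]; ring
    have h2 : p * EY = ∑ k ∈ Finset.range n,
        p ^ (k+1) * (1 - p) ^ (n - (k+1)) * (n.choose (k+1) : ℝ) := by
      rw [hEY, Finset.mul_sum]
      exact Finset.sum_congr rfl hterm
    have h3 := add_pow p (1 - p) n
    have h4 : ∑ k ∈ Finset.range (n+1),
        p ^ k * (1 - p) ^ (n - k) * (n.choose k : ℝ) = 1 := by
      rw [← h3]; norm_num
    rw [Finset.sum_range_succ' _ n] at h4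
    simp at h4
    rw [h2]
    linarith
  have hpow1 : (1 - p) ^ n < 1 := pow_lt_one₀ h1p.le (by linarith) (by omega)
  have hpown : (0:ℝ) < (1 - p) ^ n := pow_pos h1p n
  have hEYval : EY = (1 - (1 - p) ^ n) / p := by
    field_simp
    linarith [hpEY]
  have hEYpos : 0 < EY := by
    rw [hEYval]; exact div_pos (by linarith) hp0
  have hEYlt : EY < 1 / p := by
    rw [hEYval, div_lt_div_iff₀ hp0 hp0]
    nlinarith
  -- Jensen
  have hJ := (convexOn_rpow_nonpos hc.le).map_sum_le hw0 hw1 hymem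
  simp only [smul_eq_mul] at hJ
  have htheta : theta n γ p = ∑ k ∈ Finset.range n, w k * y k ^ (1 - γ) := rfl
  have h5 : (1 / p) ^ (1 - γ) = p ^ (γ - 1) := by
    rw [one_div, Real.inv_rpow hp0.le, ← Real.rpow_neg hp0.le]
    norm_num
  have h6 : (1 / p) ^ (1 - γ) < EY ^ (1 - γ) :=
    Real.rpow_lt_rpow_of_neg hEYpos hEYlt hc
  rw [htheta]
  calc p ^ (γ - 1) = (1 / p) ^ (1 - γ) := h5.symm
    _ < EY ^ (1 - γ) := h6
    _ ≤ ∑ k ∈ Finset.range n, w k * y k ^ (1 - γ) := hJ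

lemma rpow_lt_beta (n : ℕ) (hn : 2 ≤ n) {γ p : ℝ} (hγ : 1 < γ)
    (hp0 : 0 < p) (hp1 : p < 1) : p ^ γ < beta n γ p := by
  have h := rpow_lt_theta n hn hγ hp0 hp1
  have h2 : p * p ^ (γ - 1) < p * theta n γ p := by
    exact mul_lt_mul_of_pos_left h hp0
  have h3 : p * p ^ (γ - 1) = p ^ γ := by
    nth_rewrite 1 [← Real.rpow_one p]
    rw [← Real.rpow_add hp0]
    norm_num
  rw [h3] at h2
  exact h2

theorem tontine_utility_lt_annuity_utility_gamma_gt_one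
    (n : ℕ) (hn : 2 ≤ n) (γ r : ℝ) (hγ : 1 < γ) (hr : 0 < r)
    (s : ℝ → ℝ) (hmeas : Measurable s)
    (hs : ∀ t : ℝ, 0 < t → 0 < s t ∧ s t < 1)
    (hint : IntegrableOn (fun t => Real.exp (-r * t) * s t) (Ioi 0))
    (hIpos : 0 < ∫ t in Ioi (0 : ℝ), Real.exp (-r * t) * s t)
    (hintOT : IntegrableOn (fun t => Real.exp (-r * t) * (beta n γ (s t)) ^ (1 / γ)) (Ioi 0))
    (hJpos : 0 < ∫ t in Ioi (0 : ℝ), Real.exp (-r * t) * (beta n γ (s t)) ^ (1 / γ)) :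
    (1 / (1 - γ)) * (∫ t in Ioi (0 : ℝ),
        Real.exp (-r * t) * (beta n γ (s t)) ^ (1 / γ)) ^ γ
      < (1 / (1 - γ)) * (∫ t in Ioi (0 : ℝ), Real.exp (-r * t) * s t) ^ γ := by
  have hγ0 : (0:ℝ) < γ := by linarith
  set f : ℝ → ℝ := fun t => Real.exp (-r * t) * s t with hf
  set g : ℝ → ℝ := fun t => Real.exp (-r * t) * (beta n γ (s t)) ^ (1 / γ) with hg
  have hpt : ∀ t ∈ Ioi (0:ℝ), f t < g t := by
    intro t ht
    obtain ⟨hs0, hs1⟩ := hs t ht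
    have hb := rpow_lt_beta n hn hγ hs0 hs1
    have hlt : s t < (beta n γ (s t)) ^ (1 / γ) := by
      have h1 : (s t ^ γ) ^ (1 / γ) < (beta n γ (s t)) ^ (1 / γ) :=
        Real.rpow_lt_rpow (Real.rpow_nonneg hs0.le γ) hb (by positivity)
      have h2 : (s t ^ γ) ^ (1 / γ) = s t := by
        rw [← Real.rpow_mul hs0.le, mul_one_div, div_self hγ0.ne', Real.rpow_one]
      rwa [h2] at h1
    exact mul_lt_mul_of_pos_left hlt (Real.exp_pos _)
  have hIJ : (∫ t in Ioi (0:ℝ), f t) < ∫ t in Ioi (0:ℝ), g t := by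
    have hdiff : IntegrableOn (fun t => g t - f t) (Ioi 0) := hintOT.sub hint
    have h0 : 0 < ∫ t in Ioi (0:ℝ), (g t - f t) := by
      rw [setIntegral_pos_iff_support_of_nonneg_ae ?_ hdiff]
      · refine lt_of_lt_of_le ?_
          (measure_mono (subset_inter (fun t ht => ?_) subset_rfl))
        · rw [Real.volume_Ioi]; exact ENNReal.zero_lt_top
        · exact sub_ne_zero_of_ne (LT.lt.ne' (hpt t ht))
      · filter_upwards [ae_restrict_mem measurableSet_Ioi] with t ht
        have := hpt t ht
        simp only [Pi.zero_apply]
        linarith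
    rw [integral_sub hintOT hint] at h0
    linarith
  have hpow : (∫ t in Ioi (0:ℝ), f t) ^ γ < (∫ t in Ioi (0:ℝ), g t) ^ γ :=
    Real.rpow_lt_rpow hIpos.le hIJ hγ0
  have hneg : 1 / (1 - γ) < 0 := div_neg_of_pos_of_neg one_pos (by linarith)
  exact mul_lt_mul_of_neg_left hpow hneg
end

section
/- For logarithmic utility (γ = 1), the difference U^A₁ - U^{OT}_{n,1} = ∫₀^∞ e^{-rt} s(t) (E[log(N(s(t))/n)] - log s(t)) dt is strictly positive for n ≥ 2, where N(p)-1 ~ Bin(n-1,p). -/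
open Finset MeasureTheory Set

/-- E[log(N(p)/n)] where N(p) - 1 ~ Bin(n-1, p). -/
noncomputable def expLogFrac (n : ℕ) (p : ℝ) : ℝ :=
  ∑ k ∈ Finset.range n,
    ((n - 1).choose k : ℝ) * p ^ k * (1 - p) ^ (n - 1 - k) * Real.log ((k + 1 : ℝ) / n)

lemma sum_w (n : ℕ) (hn : 1 ≤ n) (p : ℝ) :
    ∑ k ∈ Finset.range n, ((n - 1).choose k : ℝ) * p ^ k * (1 - p) ^ (n - 1 - k) = 1 := by
  obtain ⟨m, rfl⟩ : ∃ m, n = m + 1 := ⟨n - 1, (Nat.succ_pred_eq_of_pos hn).symm⟩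
  have h := add_pow p (1 - p) m
  simp only [add_sub_cancel, one_pow] at h
  rw [show (m + 1 - 1) = m from rfl]
  conv_rhs => rw [h]
  exact Finset.sum_congr rfl fun k hk => by ring

lemma sum_inv (n : ℕ) (hn : 1 ≤ n) (p : ℝ) :
    ∑ k ∈ Finset.range n, ((n - 1).choose k : ℝ) * p ^ k * (1 - p) ^ (n - 1 - k)
      * ((n : ℝ) * p / (k + 1)) = 1 - (1 - p) ^ n := by
  obtain ⟨m, rfl⟩ : ∃ m, n = m + 1 := ⟨n - 1, (Nat.succ_pred_eq_of_pos hn).symm⟩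
  have key : ∀ k ∈ Finset.range (m+1),
      (((m+1) - 1).choose k : ℝ) * p ^ k * (1 - p) ^ ((m+1) - 1 - k) * (((m+1 : ℕ) : ℝ) * p / (k + 1))
      = ((m+1).choose (k+1) : ℝ) * p ^ (k+1) * (1 - p) ^ (m - k) := by
    intro k hk
    have h1 : ((m+1 : ℕ) : ℝ) * (m.choose k : ℝ) = ((m+1).choose (k+1) : ℝ) * ((k:ℝ) + 1) := by
      exact_mod_cast congrArg (Nat.cast : ℕ → ℝ) (Nat.add_one_mul_choose_eq m k)
    have hk1 : (k : ℝ) + 1 ≠ 0 := by positivity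
    rw [show (m + 1 - 1) = m from rfl]
    push_cast at h1 ⊢
    field_simp
    linear_combination (p ^ k * (1 - p) ^ (m - k) * p) * h1
  rw [Finset.sum_congr rfl key]
  have h := add_pow p (1 - p) (m+1)
  simp only [add_sub_cancel, one_pow] at h
  rw [Finset.sum_range_succ'] at h
  simp only [pow_zero, Nat.choose_zero_right, Nat.cast_one, one_mul, Nat.sub_zero] at h
  have h3 : ∑ k ∈ Finset.range (m+1), ((m+1).choose (k+1) : ℝ) * p ^ (k+1) * (1 - p) ^ (m - k)
      = ∑ i ∈ Finset.range (m+1), p ^ (i+1) * (1-p) ^ (m + 1 - (i+1)) * ((m+1).choose (i+1) : ℝ) :=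
    Finset.sum_congr rfl fun k hk => by
      rw [Finset.mem_range] at hk
      rw [show m + 1 - (k+1) = m - k from by omega]; ring
  rw [h3]
  linarith [h]

lemma key_ge (n : ℕ) (hn : 1 ≤ n) (p : ℝ) (hp : 0 < p) (hp1 : p < 1) :
    (1 - p) ^ n ≤ expLogFrac n p - Real.log p := by
  have hq : 0 < 1 - p := by linarith
  have hn0 : (0:ℝ) < (n:ℝ) := by exact_mod_cast hn
  have main : ∀ k ∈ Finset.range n,
      ((n-1).choose k : ℝ) * p^k * (1-p)^(n-1-k) * (1 - (n:ℝ)*p/((k:ℝ)+1))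
      ≤ ((n-1).choose k : ℝ) * p^k * (1-p)^(n-1-k) * (Real.log (((k:ℝ)+1)/n) - Real.log p) := by
    intro k hk
    apply mul_le_mul_of_nonneg_left _ (by positivity)
    have hk1 : (0:ℝ) < (k:ℝ) + 1 := by positivity
    have hx : (0:ℝ) < (n:ℝ)*p/((k:ℝ)+1) := by positivity
    have hlog := Real.log_le_sub_one_of_pos hx
    have e : Real.log ((n:ℝ)*p/((k:ℝ)+1)) = Real.log p - Real.log (((k:ℝ)+1)/n) := by
      rw [Real.log_div (by positivity) hk1.ne', Real.log_mul hn0.ne' hp.ne',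
          Real.log_div hk1.ne' hn0.ne']
      ring
    rw [e] at hlog
    have : (n:ℝ)*p/((k:ℝ)+1) - 1 = (n:ℝ)*p/((k:ℝ)+1) - 1 := rfl
    nlinarith [hlog]
  have hsum := Finset.sum_le_sum main
  have hl : ∑ k ∈ Finset.range n,
      ((n-1).choose k : ℝ) * p^k * (1-p)^(n-1-k) * (1 - (n:ℝ)*p/((k:ℝ)+1)) = (1-p)^n := by
    have e1 : ∀ k ∈ Finset.range n,
        ((n-1).choose k : ℝ) * p^k * (1-p)^(n-1-k) * (1 - (n:ℝ)*p/((k:ℝ)+1))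
        = ((n-1).choose k : ℝ) * p^k * (1-p)^(n-1-k)
          - ((n-1).choose k : ℝ) * p^k * (1-p)^(n-1-k) * ((n:ℝ)*p/((k:ℝ)+1)) :=
      fun k _ => by ring
    rw [Finset.sum_congr rfl e1, Finset.sum_sub_distrib, sum_w n hn p, sum_inv n hn p]
    ring
  have hr : ∑ k ∈ Finset.range n,
      ((n-1).choose k : ℝ) * p^k * (1-p)^(n-1-k) * (Real.log (((k:ℝ)+1)/n) - Real.log p)
      = expLogFrac n p - Real.log p := by
    have e1 : ∀ k ∈ Finset.range n,
        ((n-1).choose k : ℝ) * p^k * (1-p)^(n-1-k) * (Real.log (((k:ℝ)+1)/n) - Real.log p)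
        = ((n-1).choose k : ℝ) * p^k * (1-p)^(n-1-k) * Real.log (((k:ℝ)+1)/n)
          - ((n-1).choose k : ℝ) * p^k * (1-p)^(n-1-k) * Real.log p :=
      fun k _ => by ring
    rw [Finset.sum_congr rfl e1, Finset.sum_sub_distrib, ← Finset.sum_mul, sum_w n hn p,
        one_mul, expLogFrac]
  rw [hl, hr] at hsum
  exact hsum

theorem log_utility_annuity_minus_tontine_pos
    (n : ℕ) (hn : 2 ≤ n) (r : ℝ) (hr : 0 < r)
    (s : ℝ → ℝ) (hmeas : Measurable s)
    (hs : ∀ t : ℝ, 0 < t → 0 < s t ∧ s t < 1)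
    (hint : IntegrableOn
      (fun t => Real.exp (-r * t) * s t * (expLogFrac n (s t) - Real.log (s t))) (Ioi 0)) :
    0 < ∫ t in Ioi (0 : ℝ),
        Real.exp (-r * t) * s t * (expLogFrac n (s t) - Real.log (s t)) := by
  set f := fun t => Real.exp (-r * t) * s t * (expLogFrac n (s t) - Real.log (s t)) with hf
  have hpos : ∀ t ∈ Ioi (0:ℝ), 0 < f t := by
    intro t ht
    obtain ⟨h1, h2⟩ := hs t ht
    have hkey := key_ge n (by omega) (s t) h1 h2
    have h0 : (0:ℝ) < (1 - s t) ^ n := pow_pos (by linarith) n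
    have h3 : 0 < expLogFrac n (s t) - Real.log (s t) := lt_of_lt_of_le h0 hkey
    exact mul_pos (mul_pos (Real.exp_pos _) h1) h3
  have hae : 0 ≤ᵐ[volume.restrict (Ioi 0)] f :=
    (ae_restrict_iff' measurableSet_Ioi).mpr (Filter.Eventually.of_forall fun t ht => (hpos t ht).le)
  rw [setIntegral_pos_iff_support_of_nonneg_ae hae hint]
  have hsub : Ioi (0:ℝ) ⊆ Function.support f := fun t ht => (hpos t ht).ne'
  rw [Set.inter_eq_self_of_subset_right hsub]
  simp [Real.volume_Ioi]
end

section
/- Suppose 1 < γ ≤ 2. Then β_{n,γ}(p)^{1/γ} = (pθ_{n,γ}(p))^{1/γ} < p + ((γ-1)/(γn))·(1-p) for all 0 < p < 1, where θ_{n,γ}(p) = E[(N(p)/n)^{γ-1}], N(p)-1 ~ Bin(n-1,p). -/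
open Finset

lemma bern_sum (m : ℕ) (p : ℝ) :
    ∑ k ∈ Finset.range (m+1), (m.choose k : ℝ) * p^k * (1-p)^(m-k) = 1 := by
  have h := congrArg (Polynomial.eval p) (bernsteinPolynomial.sum ℝ m)
  simpa [bernsteinPolynomial, Polynomial.eval_finset_sum] using h

lemma bern_mean (m : ℕ) (p : ℝ) :
    ∑ k ∈ Finset.range (m+1), (k:ℝ) * ((m.choose k : ℝ) * p^k * (1-p)^(m-k)) = m * p := by
  have h := congrArg (Polynomial.eval p) (bernsteinPolynomial.sum_smul ℝ m)
  simp [bernsteinPolynomial, Polynomial.eval_finset_sum] at h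
  rw [← h]

theorem beta_rpow_tangent_bound (n : ℕ) (hn : 1 ≤ n) (γ : ℝ) (hγ1 : 1 < γ) (hγ2 : γ ≤ 2) :
    ∀ p : ℝ, 0 < p → p < 1 →
      (beta n γ p) ^ (1 / γ) < p + ((γ - 1) / (γ * n)) * (1 - p) := by
  intro p hp0 hp1
  obtain ⟨m, rfl⟩ : ∃ m, n = m + 1 := ⟨n - 1, (Nat.succ_pred_eq_of_pos hn).symm⟩
  set n := m + 1 with hndef
  have hnpos : (0:ℝ) < n := by positivity
  have hmcast : ((m:ℝ)) = (n:ℝ) - 1 := by push_cast [hndef]; ring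
  set s : ℝ := γ - 1 with hs
  have hs0 : 0 < s := by simp [hs]; linarith
  have hs1 : s ≤ 1 := by simp [hs]; linarith
  -- weights
  set w : ℕ → ℝ := fun k => (m.choose k : ℝ) * p ^ k * (1 - p) ^ (m - k) with hw
  have hwnonneg : ∀ k, 0 ≤ w k := fun k => by
    have h1 : (0:ℝ) ≤ 1 - p := by linarith
    positivity
  have hS0 : ∑ k ∈ Finset.range n, w k = 1 := bern_sum m p
  have hS1 : ∑ k ∈ Finset.range n, (k:ℝ) * w k = m * p := bern_mean m p
  have hps : (0:ℝ) < p ^ s := Real.rpow_pos_of_pos hp0 s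
  set u : ℝ := s * ((1 - p) / (n * p)) with hu
  have hpne : p ≠ 0 := hp0.ne'
  have hnne : ((n:ℕ):ℝ) ≠ 0 := hnpos.ne'
  have hγ0 : (0:ℝ) < γ := by linarith
  have hγne : γ ≠ 0 := hγ0.ne'
  have hupos : 0 < u := by
    apply mul_pos hs0
    apply div_pos (by linarith) (by positivity)
  -- pointwise tangent bound
  have point : ∀ k : ℕ, ((n : ℝ) / (k + 1)) ^ (1 - γ) ≤
      p ^ s * (1 + s * ((((k:ℝ)+1)/n)/p - 1)) := by
    intro k
    set x : ℝ := ((k:ℝ)+1)/n with hx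
    have hxpos : 0 < x := by positivity
    have h1 : ((n : ℝ) / ((k:ℝ) + 1)) ^ (1 - γ) = x ^ s := by
      rw [show (1 - γ) = -s by rw [hs]; ring, Real.rpow_neg (by positivity),
        ← Real.inv_rpow (by positivity), inv_div]
    rw [h1]
    have ht : -1 ≤ x/p - 1 := by
      have : 0 < x / p := div_pos hxpos hp0
      linarith
    have hb := rpow_one_add_le_one_add_mul_self ht hs0.le hs1
    have hxp : x ^ s = p ^ s * (1 + (x/p - 1)) ^ s := by
      rw [show 1 + (x/p - 1) = x/p by ring, Real.div_rpow hxpos.le hp0.le]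
      field_simp
    rw [hxp]
    calc p ^ s * (1 + (x/p - 1)) ^ s ≤ p ^ s * (1 + s * (x/p - 1)) := by
          exact mul_le_mul_of_nonneg_left hb hps.le
      _ = p ^ s * (1 + s * ((x)/p - 1)) := by ring
  -- sum of the tangent bounds
  have hsum : ∑ k ∈ Finset.range n, w k * (p ^ s * (1 + s * ((((k:ℝ)+1)/n)/p - 1)))
      = p ^ s * (1 + u) := by
    have expand : ∀ k ∈ Finset.range n,
        w k * (p ^ s * (1 + s * ((((k:ℝ)+1)/n)/p - 1)))
        = p ^ s * ((1 - s + s/(n*p)) * w k + (s/(n*p)) * ((k:ℝ) * w k)) := by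
      intro k _
      field_simp [hpne, hnne]
      ring
    rw [Finset.sum_congr rfl expand, ← Finset.mul_sum, Finset.sum_add_distrib,
      ← Finset.mul_sum, ← Finset.mul_sum, hS0, hS1]
    rw [hu, hmcast]
    field_simp [hpne, hnne]
    ring
  -- bound on theta
  have htheta : theta n γ p ≤ p ^ s * (1 + u) := by
    rw [theta, ← hsum]
    apply Finset.sum_le_sum
    intro k hk
    have : ((m+1) - 1 : ℕ) = m := by omega
    rw [show n - 1 = m from this]
    exact mul_le_mul_of_nonneg_left (point k) (hwnonneg k)
  have hthetanonneg : 0 ≤ theta n γ p := by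
    apply Finset.sum_nonneg
    intro k hk
    have : ((m+1) - 1 : ℕ) = m := by omega
    rw [show n - 1 = m from this]
    exact mul_nonneg (hwnonneg k) (Real.rpow_nonneg (by positivity) _)
  have hbeta : beta n γ p ≤ p ^ γ * (1 + u) := by
    have : p * (p ^ s * (1 + u)) = p ^ γ * (1 + u) := by
      rw [show (γ:ℝ) = 1 + s by rw [hs]; ring, Real.rpow_add hp0, Real.rpow_one]
      ring
    rw [beta, ← this]
    exact mul_le_mul_of_nonneg_left htheta hp0.le
  have hbetanonneg : 0 ≤ beta n γ p := mul_nonneg hp0.le hthetanonneg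
  have step1 : (beta n γ p) ^ (1/γ) ≤ (p ^ γ * (1 + u)) ^ (1/γ) :=
    Real.rpow_le_rpow hbetanonneg hbeta (by positivity)
  have hsplit : (p ^ γ * (1 + u)) ^ (1/γ) = p * (1 + u) ^ (1/γ) := by
    rw [Real.mul_rpow (Real.rpow_nonneg hp0.le _) (by linarith),
      ← Real.rpow_mul hp0.le, mul_one_div, div_self hγ0.ne', Real.rpow_one]
  have step2 : (1 + u) ^ (1/γ) < 1 + (1/γ) * u := by
    apply rpow_one_add_lt_one_add_mul_self (by linarith) hupos.ne' (by positivity)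
    rw [div_lt_one hγ0]; linarith
  have step3 : p * (1 + (1/γ) * u) = p + ((γ - 1) / (γ * n)) * (1 - p) := by
    rw [hu, hs]
    field_simp [hpne, hnne, hγne]
  calc (beta n γ p) ^ (1/γ) ≤ p * (1 + u) ^ (1/γ) := by rw [← hsplit]; exact step1
    _ < p * (1 + (1/γ) * u) := by
        exact mul_lt_mul_of_pos_left step2 hp0
    _ = p + ((γ - 1) / (γ * n)) * (1 - p) := step3
end
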